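/- arXiv:0902.1470 — 4 statements merged into one kernel-verified Lean document; each statement's English description precedes it below -/
import Mathlib

section
/- Let n ≥ 2 and let p be any proper divisor of n. Then there exists a semitransitive subsemigroup S of the singular part I_n \ S_n of the symmetric inverse semigroup with |S| = 2n − p + 1. -/
/-- `ISemi n` is the symmetric inverse semigroup `I_n`, realized as the set of all
partial injective maps (partial permutations) of the `n`-element set `Fin n`,
with composition given by `PEquiv.trans` (apply the left factor first, matching
the right-action convention `x φ`). -/
abbrev ISemi (n : ℕ) := PEquiv (Fin n) (Fin n)

/-- `S` is a subsemigroup of `I_n`: a subset closed under composition. -/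
def IsSubsemigroup {n : ℕ} (S : Set (ISemi n)) : Prop :=
  ∀ a ∈ S, ∀ b ∈ S, a.trans b ∈ S

/-- `φ` belongs to the singular part `I_n \ S_n`: its domain is a proper subset
of the underlying set, i.e. it is undefined somewhere. -/
def IsSingular {n : ℕ} (φ : ISemi n) : Prop :=
  ∃ x : Fin n, φ x = none

/-- `S` is semitransitive: for all `x, y` there is `φ ∈ S` with `φ x = y` or `φ y = x`. -/
def Semitransitive {n : ℕ} (S : Set (ISemi n)) : Prop :=
  ∀ x y : Fin n, ∃ φ ∈ S, φ x = some y ∨ φ y = some x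

/-- The semitransitivity preorder induced by `S`: `x ≥ y` iff some `φ ∈ S` maps `x` to `y`. -/
def STGe {n : ℕ} (S : Set (ISemi n)) (x y : Fin n) : Prop :=
  ∃ φ ∈ S, φ x = some y

/-- The transitivity block of `x`: the equivalence class of `x` under `x ≥ y ∧ y ≥ x`. -/
def STBlock {n : ℕ} (S : Set (ISemi n)) (x : Fin n) : Set (Fin n) :=
  {y | STGe S x y ∧ STGe S y x}

/-- `k`-th power of `φ` under composition (`pePow φ 0` is the identity). -/
def pePow {n : ℕ} (φ : ISemi n) : ℕ → ISemi n
  | 0 => PEquiv.refl (Fin n)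
  | k + 1 => (pePow φ k).trans φ

set_option linter.unusedSectionVars false
set_option linter.unusedVariables false

namespace STCore

variable (p m : ℕ)

abbrev B (p m : ℕ) := ZMod m × ZMod p

/-- Translation by `v` restricted to block interval `[lo, hi]`. -/
def T (lo hi : ℕ) (v : B p m) : PEquiv (B p m) (B p m) where
  toFun x := if lo ≤ x.1.val ∧ x.1.val ≤ hi then some (v + x) else none
  invFun y := if lo ≤ (y - v).1.val ∧ (y - v).1.val ≤ hi then some (y - v) else none
  inv a b := by
    constructor
    · intro h
      split_ifs at h with h1
      obtain rfl : a = b - v := Option.some_injective _ h.symm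
      simp only [add_sub_cancel, if_pos h1]
    · intro h
      split_ifs at h with h1
      obtain rfl : b = v + a := (Option.some_injective _ h).symm
      simp only [add_sub_cancel_left, if_pos h1]

lemma T_apply (lo hi : ℕ) (v x : B p m) :
    T p m lo hi v x = if lo ≤ x.1.val ∧ x.1.val ≤ hi then some (v + x) else none := rfl

lemma trans_apply {α β γ : Type*} (f : α ≃. β) (g : β ≃. γ) (a : α) :
    (f.trans g) a = (f a).bind g := rfl

variable [NeZero m]

lemma T_eq_bot {lo hi : ℕ} (v : B p m) (h : hi < lo ∨ m ≤ lo) : T p m lo hi v = ⊥ := by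
  ext x
  rw [T_apply, PEquiv.bot_apply, if_neg]
  have := ZMod.val_lt x.1
  omega

lemma T_trans_T (lo hi lo' hi' : ℕ) (v v' : B p m)
    (hnw : hi + v.1.val < m) (hk : v.1.val ≤ hi') :
    (T p m lo hi v).trans (T p m lo' hi' v') =
      T p m (max lo (lo' - v.1.val)) (min hi (hi' - v.1.val)) (v' + v) := by
  ext x
  rw [trans_apply, T_apply, T_apply]
  by_cases h1 : lo ≤ x.1.val ∧ x.1.val ≤ hi
  · rw [if_pos h1, Option.bind_some, T_apply]
    have hval : (v + x).1.val = v.1.val + x.1.val := by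
      show (v.1 + x.1).val = _
      rw [ZMod.val_add]
      exact Nat.mod_eq_of_lt (by omega)
    have hcond : (lo' ≤ (v + x).1.val ∧ (v + x).1.val ≤ hi') ↔
        (max lo (lo' - v.1.val) ≤ x.1.val ∧ x.1.val ≤ min hi (hi' - v.1.val)) := by
      rw [hval]; omega
    by_cases h2 : lo' ≤ (v + x).1.val ∧ (v + x).1.val ≤ hi'
    · rw [if_pos h2, if_pos (hcond.mp h2), add_assoc]
    · rw [if_neg h2, if_neg (fun hc => h2 (hcond.mpr hc))]
  · rw [if_neg h1, Option.bind_none, if_neg (by omega)]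

lemma T_trans_T_bot (lo hi lo' hi' : ℕ) (v v' : B p m)
    (hnw : hi + v.1.val < m) (hk : hi' < v.1.val) :
    (T p m lo hi v).trans (T p m lo' hi' v') = ⊥ := by
  ext x
  rw [trans_apply, T_apply, PEquiv.bot_apply]
  by_cases h1 : lo ≤ x.1.val ∧ x.1.val ≤ hi
  · rw [if_pos h1, Option.bind_some, T_apply, if_neg]
    have hval : (v + x).1.val = v.1.val + x.1.val := by
      show (v.1 + x.1).val = _
      rw [ZMod.val_add]
      exact Nat.mod_eq_of_lt (by omega)
    omega
  · rw [if_neg h1, Option.bind_none]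

def fE (r : ZMod p) : PEquiv (B p m) (B p m) := T p m 1 (m-1) (0, r)
def fG (v : B p m) : PEquiv (B p m) (B p m) := T p m 0 0 v
def fP (i : Fin (m-2) × ZMod p) : PEquiv (B p m) (B p m) :=
  T p m 1 (m-2-i.1.val) ((i.1.val+1 : ℕ), i.2)

def S0 : Set (PEquiv (B p m) (B p m)) :=
  insert ⊥ (Set.range (fE p m) ∪ (Set.range (fG p m) ∪ Set.range (fP p m)))

lemma mem_S0_iff (φ : PEquiv (B p m) (B p m)) :
    φ ∈ S0 p m ↔ φ = ⊥ ∨ (∃ r, φ = T p m 1 (m-1) (0, r)) ∨ (∃ v, φ = T p m 0 0 v) ∨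
      (∃ k r, 1 ≤ k ∧ k + 2 ≤ m ∧ φ = T p m 1 (m-1-k) ((k : ZMod m), r)) := by
  simp only [S0, Set.mem_insert_iff, Set.mem_union, Set.mem_range, fE, fG, fP]
  constructor
  · rintro (h | ⟨r, h⟩ | ⟨v, h⟩ | ⟨⟨i, r⟩, rfl⟩)
    · exact Or.inl h
    · exact Or.inr (Or.inl ⟨r, h.symm⟩)
    · exact Or.inr (Or.inr (Or.inl ⟨v, h.symm⟩))
    · refine Or.inr (Or.inr (Or.inr ⟨i.val + 1, r, by omega, by have := i.isLt; omega, ?_⟩))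
      have h2 : m - 2 - i.val = m - 1 - (i.val + 1) := by omega
      rw [h2]
  · rintro (h | h | h | ⟨k, r, hk1, hk2, rfl⟩)
    · exact Or.inl h
    · obtain ⟨r, h⟩ := h; exact Or.inr (Or.inl ⟨r, h.symm⟩)
    · obtain ⟨v, h⟩ := h; exact Or.inr (Or.inr (Or.inl ⟨v, h.symm⟩))
    · refine Or.inr (Or.inr (Or.inr ⟨⟨⟨k - 1, by omega⟩, r⟩, ?_⟩))
      have h1 : k - 1 + 1 = k := by omega
      have h2 : m - 2 - (k - 1) = m - 1 - k := by omega
      simp only [h1, h2]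


lemma val_natCast_lt {k : ℕ} (h : k < m) : ((k : ZMod m)).val = k := ZMod.val_cast_of_lt h

lemma S0_closed (hm : 2 ≤ m) {a b : PEquiv (B p m) (B p m)}
    (ha : a ∈ S0 p m) (hb : b ∈ S0 p m) : a.trans b ∈ S0 p m := by
  rw [mem_S0_iff] at ha hb ⊢
  rcases ha with rfl | ⟨r, rfl⟩ | ⟨v, rfl⟩ | ⟨k, r, hk1, hk2, rfl⟩
  · left; exact PEquiv.bot_trans b
  -- a = E r
  · have hv0 : ((0 : ZMod m), r).1.val = 0 := ZMod.val_zero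
    rcases hb with rfl | ⟨s, rfl⟩ | ⟨w, rfl⟩ | ⟨k', s, hk1', hk2', rfl⟩
    · left; exact PEquiv.trans_bot _
    · -- E · E = E
      refine Or.inr (Or.inl ⟨r + s, ?_⟩)
      rw [T_trans_T p m 1 (m-1) 1 (m-1) ((0 : ZMod m), r) ((0 : ZMod m), s) (by omega) (by omega)]
      have e1 : max 1 (1 - ((0 : ZMod m), r).1.val) = 1 := by omega
      have e2 : min (m-1) (m - 1 - ((0 : ZMod m), r).1.val) = m - 1 := by omega
      rw [e1, e2]
      congr 1
      simp [Prod.ext_iff, add_comm]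
    · -- E · G = ⊥
      left
      rw [T_trans_T p m 1 (m-1) 0 0 ((0 : ZMod m), r) w (by omega) (by omega)]
      exact T_eq_bot p m _ (by omega)
    · -- E · P = P
      refine Or.inr (Or.inr (Or.inr ⟨k', r + s, hk1', hk2', ?_⟩))
      rw [T_trans_T p m 1 (m-1) 1 (m-1-k') ((0 : ZMod m), r) ((k' : ZMod m), s) (by omega) (by omega)]
      have e1 : max 1 (1 - ((0 : ZMod m), r).1.val) = 1 := by omega
      have e2 : min (m-1) (m - 1 - k' - ((0 : ZMod m), r).1.val) = m - 1 - k' := by omega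
      rw [e1, e2]
      congr 1
      simp [Prod.ext_iff, add_comm]
  -- a = G v
  · have hv : v.1.val < m := ZMod.val_lt v.1
    rcases hb with rfl | ⟨s, rfl⟩ | ⟨w, rfl⟩ | ⟨k', s, hk1', hk2', rfl⟩
    · left; exact PEquiv.trans_bot _
    · -- G · E
      by_cases hj : v.1.val = 0
      · left
        rw [T_trans_T p m 0 0 1 (m-1) v ((0 : ZMod m), s) (by omega) (by omega)]
        exact T_eq_bot p m _ (by omega)
      · refine Or.inr (Or.inr (Or.inl ⟨((0 : ZMod m), s) + v, ?_⟩))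
        rw [T_trans_T p m 0 0 1 (m-1) v ((0 : ZMod m), s) (by omega) (by omega)]
        have e1 : max 0 (1 - v.1.val) = 0 := by omega
        have e2 : min 0 (m - 1 - v.1.val) = 0 := by omega
        rw [e1, e2]
    · -- G · G
      by_cases hj : v.1.val = 0
      · refine Or.inr (Or.inr (Or.inl ⟨w + v, ?_⟩))
        rw [T_trans_T p m 0 0 0 0 v w (by omega) (by omega)]
        have e1 : max 0 (0 - v.1.val) = 0 := by omega
        have e2 : min 0 (0 - v.1.val) = 0 := by omega
        rw [e1, e2]
      · left
        exact T_trans_T_bot p m 0 0 0 0 v w (by omega) (by omega)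
    · -- G · P
      by_cases hj : v.1.val = 0
      · left
        rw [T_trans_T p m 0 0 1 (m-1-k') v ((k' : ZMod m), s) (by omega) (by omega)]
        exact T_eq_bot p m _ (by omega)
      · by_cases hj2 : v.1.val ≤ m - 1 - k'
        · refine Or.inr (Or.inr (Or.inl ⟨((k' : ZMod m), s) + v, ?_⟩))
          rw [T_trans_T p m 0 0 1 (m-1-k') v ((k' : ZMod m), s) (by omega) (by omega)]
          have e1 : max 0 (1 - v.1.val) = 0 := by omega
          have e2 : min 0 (m - 1 - k' - v.1.val) = 0 := by omega
          rw [e1, e2]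
        · left
          exact T_trans_T_bot p m 0 0 1 (m-1-k') v ((k' : ZMod m), s) (by omega) (by omega)
  -- a = P k r
  · have hkv : ((k : ZMod m), r).1.val = k := ZMod.val_cast_of_lt (by omega)
    rcases hb with rfl | ⟨s, rfl⟩ | ⟨w, rfl⟩ | ⟨k', s, hk1', hk2', rfl⟩
    · left; exact PEquiv.trans_bot _
    · -- P · E = P
      refine Or.inr (Or.inr (Or.inr ⟨k, r + s, hk1, hk2, ?_⟩))
      rw [T_trans_T p m 1 (m-1-k) 1 (m-1) ((k : ZMod m), r) ((0 : ZMod m), s) (by omega) (by omega)]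
      have e1 : max 1 (1 - ((k : ZMod m), r).1.val) = 1 := by omega
      have e2 : min (m-1-k) (m - 1 - ((k : ZMod m), r).1.val) = m - 1 - k := by omega
      rw [e1, e2]
      congr 1
      simp [Prod.ext_iff, add_comm]
    · -- P · G = ⊥
      left
      exact T_trans_T_bot p m 1 (m-1-k) 0 0 ((k : ZMod m), r) w (by omega) (by omega)
    · -- P · P
      by_cases hsum : k + k' + 2 ≤ m
      · refine Or.inr (Or.inr (Or.inr ⟨k + k', r + s, by omega, hsum, ?_⟩))
        rw [T_trans_T p m 1 (m-1-k) 1 (m-1-k') ((k : ZMod m), r) ((k' : ZMod m), s) (by omega) (by omega)]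
        have e1 : max 1 (1 - ((k : ZMod m), r).1.val) = 1 := by omega
        have e2 : min (m-1-k) (m - 1 - k' - ((k : ZMod m), r).1.val) = m - 1 - (k + k') := by omega
        rw [e1, e2]
        congr 1
        simp only [Prod.ext_iff, Prod.fst_add, Prod.snd_add]
        constructor
        · push_cast; ring
        · exact add_comm s r
      · by_cases hle : k ≤ m - 1 - k'
        · left
          rw [T_trans_T p m 1 (m-1-k) 1 (m-1-k') ((k : ZMod m), r) ((k' : ZMod m), s) (by omega) (by omega)]
          exact T_eq_bot p m _ (by omega)
        · left
          exact T_trans_T_bot p m 1 (m-1-k) 1 (m-1-k') ((k : ZMod m), r) ((k' : ZMod m), s) (by omega) (by omega)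

lemma S0_singular (hm : 2 ≤ m) {φ : PEquiv (B p m) (B p m)} (h : φ ∈ S0 p m) :
    ∃ x : B p m, φ x = none := by
  rw [mem_S0_iff] at h
  rcases h with rfl | ⟨r, rfl⟩ | ⟨v, rfl⟩ | ⟨k, r, hk1, hk2, rfl⟩
  · exact ⟨0, rfl⟩
  · refine ⟨((0 : ZMod m), 0), ?_⟩
    rw [T_apply, if_neg]
    simp [ZMod.val_zero]
  · refine ⟨(((1 : ℕ) : ZMod m), 0), ?_⟩
    rw [T_apply, if_neg]
    rw [ZMod.val_cast_of_lt (by omega : (1:ℕ) < m)]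
    omega
  · refine ⟨(((m - 1 : ℕ) : ZMod m), 0), ?_⟩
    rw [T_apply, if_neg]
    rw [ZMod.val_cast_of_lt (by omega : m - 1 < m)]
    omega

lemma natCast_val_self (x : ZMod m) : ((x.val : ℕ) : ZMod m) = x := ZMod.natCast_rightInverse x

lemma S0_semitrans (hm : 2 ≤ m) (x y : B p m) :
    ∃ φ ∈ S0 p m, φ x = some y ∨ φ y = some x := by
  have hxv : x.1.val < m := ZMod.val_lt x.1
  have hyv : y.1.val < m := ZMod.val_lt y.1
  by_cases hx : x.1.val = 0
  · refine ⟨T p m 0 0 (y - x), (mem_S0_iff p m _).mpr (Or.inr (Or.inr (Or.inl ⟨_, rfl⟩))),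
      Or.inl ?_⟩
    rw [T_apply, if_pos (by omega), sub_add_cancel]
  by_cases hy : y.1.val = 0
  · refine ⟨T p m 0 0 (x - y), (mem_S0_iff p m _).mpr (Or.inr (Or.inr (Or.inl ⟨_, rfl⟩))),
      Or.inr ?_⟩
    rw [T_apply, if_pos (by omega), sub_add_cancel]
  rcases lt_trichotomy x.1.val y.1.val with hlt | heq | hgt
  · -- x block < y block : use P
    refine ⟨T p m 1 (m - 1 - (y.1.val - x.1.val)) (((y.1.val - x.1.val : ℕ) : ZMod m), y.2 - x.2),
      (mem_S0_iff p m _).mpr (Or.inr (Or.inr (Or.inr ⟨_, _, by omega, by omega, rfl⟩))),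
      Or.inl ?_⟩
    rw [T_apply, if_pos (by omega)]
    congr 1
    ext
    · show ((y.1.val - x.1.val : ℕ) : ZMod m) + x.1 = y.1
      have h3 : y.1.val - x.1.val + x.1.val = y.1.val := by omega
      have h2 : ((y.1.val - x.1.val : ℕ) : ZMod m) + ((x.1.val : ℕ) : ZMod m) = y.1 := by
        rw [← Nat.cast_add, h3, natCast_val_self]
      rwa [natCast_val_self] at h2
    · exact sub_add_cancel _ _
  · -- same block : use E
    have h1 : x.1 = y.1 := by
      rw [← natCast_val_self m x.1, heq, natCast_val_self]
    refine ⟨T p m 1 (m - 1) ((0 : ZMod m), y.2 - x.2),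
      (mem_S0_iff p m _).mpr (Or.inr (Or.inl ⟨_, rfl⟩)), Or.inl ?_⟩
    rw [T_apply, if_pos (by omega)]
    congr 1
    ext
    · show (0 : ZMod m) + x.1 = y.1
      rw [zero_add, h1]
    · exact sub_add_cancel _ _
  · -- x block > y block : use P on y
    refine ⟨T p m 1 (m - 1 - (x.1.val - y.1.val)) (((x.1.val - y.1.val : ℕ) : ZMod m), x.2 - y.2),
      (mem_S0_iff p m _).mpr (Or.inr (Or.inr (Or.inr ⟨_, _, by omega, by omega, rfl⟩))),
      Or.inr ?_⟩
    rw [T_apply, if_pos (by omega)]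
    congr 1
    ext
    · show ((x.1.val - y.1.val : ℕ) : ZMod m) + y.1 = x.1
      have h3 : x.1.val - y.1.val + y.1.val = x.1.val := by omega
      have h2 : ((x.1.val - y.1.val : ℕ) : ZMod m) + ((y.1.val : ℕ) : ZMod m) = x.1 := by
        rw [← Nat.cast_add, h3, natCast_val_self]
      rwa [natCast_val_self] at h2
    · exact sub_add_cancel _ _

section Card
variable [NeZero p]

lemma fE_injective (hm : 2 ≤ m) : Function.Injective (fE p m) := by
  intro r s h
  have h1 := DFunLike.congr_fun h (((1:ℕ) : ZMod m), (0 : ZMod p))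
  rw [fE, fE, T_apply, T_apply] at h1
  rw [ZMod.val_cast_of_lt (by omega : (1:ℕ) < m)] at h1
  rw [if_pos (by omega), if_pos (by omega)] at h1
  have h2 := congrArg Prod.snd (Option.some_injective _ h1)
  simpa using h2

lemma fG_injective : Function.Injective (fG p m) := by
  intro v w h
  have h1 := DFunLike.congr_fun h (0 : B p m)
  rw [fG, fG, T_apply, T_apply] at h1
  have hc : (0 : ℕ) ≤ (0 : B p m).1.val ∧ (0 : B p m).1.val ≤ 0 := by simp [ZMod.val_zero]
  rw [if_pos hc, if_pos hc] at h1
  have h2 := Option.some_injective _ h1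
  simpa using h2

lemma fP_injective (hm : 2 ≤ m) : Function.Injective (fP p m) := by
  intro i j h
  have hi := i.1.isLt
  have hj := j.1.isLt
  have h1 := DFunLike.congr_fun h (((1:ℕ) : ZMod m), (0 : ZMod p))
  rw [fP, fP, T_apply, T_apply] at h1
  rw [ZMod.val_cast_of_lt (by omega : (1:ℕ) < m)] at h1
  rw [if_pos (by omega), if_pos (by omega)] at h1
  have h2 := Option.some_injective _ h1
  have h3 := congrArg Prod.fst h2
  have h4 := congrArg Prod.snd h2
  simp only [Prod.fst_add, Prod.snd_add] at h3 h4
  have h5 : ((i.1.val + 1 + 1 : ℕ) : ZMod m) = ((j.1.val + 1 + 1 : ℕ) : ZMod m) := by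
    push_cast at h3 ⊢
    rw [add_assoc, add_assoc]
    exact_mod_cast h3
  have h6 := congrArg ZMod.val h5
  rw [ZMod.val_cast_of_lt (by omega), ZMod.val_cast_of_lt (by omega)] at h6
  have : i.1 = j.1 := Fin.ext (by omega)
  have h7 : i.2 = j.2 := by simpa using h4
  exact Prod.ext this h7

lemma fE_apply_zero (r : ZMod p) : fE p m r ((0 : ZMod m), (0 : ZMod p)) = none := by
  rw [fE, T_apply, if_neg]
  simp [ZMod.val_zero]

lemma fP_apply_zero (i : Fin (m-2) × ZMod p) : fP p m i ((0 : ZMod m), (0 : ZMod p)) = none := by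
  rw [fP, T_apply, if_neg]
  simp [ZMod.val_zero]

lemma fG_apply_zero (v : B p m) : fG p m v ((0 : ZMod m), (0 : ZMod p)) ≠ none := by
  rw [fG, T_apply, if_pos (by simp [ZMod.val_zero])]
  simp

lemma fE_apply_one (hm : 2 ≤ m) (r : ZMod p) :
    fE p m r (((1:ℕ) : ZMod m), (0 : ZMod p)) ≠ none := by
  rw [fE, T_apply, if_pos]
  · simp
  · rw [ZMod.val_cast_of_lt (by omega : (1:ℕ) < m)]; omega

lemma fE_apply_top (hm : 2 ≤ m) (r : ZMod p) :
    fE p m r (((m - 1 : ℕ) : ZMod m), (0 : ZMod p)) ≠ none := by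
  rw [fE, T_apply, if_pos]
  · simp
  · rw [ZMod.val_cast_of_lt (by omega : m - 1 < m)]; omega

lemma fP_apply_top (hm : 2 ≤ m) (i : Fin (m-2) × ZMod p) :
    fP p m i (((m - 1 : ℕ) : ZMod m), (0 : ZMod p)) = none := by
  have := i.1.isLt
  rw [fP, T_apply, if_neg]
  rw [ZMod.val_cast_of_lt (by omega : m - 1 < m)]
  omega

lemma fP_apply_one (hm : 2 ≤ m) (i : Fin (m-2) × ZMod p) :
    fP p m i (((1:ℕ) : ZMod m), (0 : ZMod p)) ≠ none := by
  have := i.1.isLt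
  rw [fP, T_apply, if_pos]
  · simp
  · rw [ZMod.val_cast_of_lt (by omega : (1:ℕ) < m)]; omega

lemma ncard_S0 (hm : 2 ≤ m) : (S0 p m).ncard = 1 + (p + (m * p + (m - 2) * p)) := by
  have hdGP : Disjoint (Set.range (fG p m)) (Set.range (fP p m)) := by
    rw [Set.disjoint_left]
    rintro a ⟨v, rfl⟩ ⟨i, h⟩
    exact fG_apply_zero p m v (by rw [← h, fP_apply_zero])
  have hdE : Disjoint (Set.range (fE p m)) (Set.range (fG p m) ∪ Set.range (fP p m)) := by
    rw [Set.disjoint_left]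
    rintro a ⟨r, rfl⟩ (⟨v, h⟩ | ⟨i, h⟩)
    · exact fG_apply_zero p m v (by rw [h, fE_apply_zero])
    · exact fE_apply_top p m hm r (by rw [← h, fP_apply_top p m hm])
  have hfin1 : (Set.range (fE p m)).Finite := Set.finite_range _
  have hfin2 : (Set.range (fG p m)).Finite := Set.finite_range _
  have hfin3 : (Set.range (fP p m)).Finite := Set.finite_range _
  have hbot : (⊥ : PEquiv (B p m) (B p m)) ∉
      Set.range (fE p m) ∪ (Set.range (fG p m) ∪ Set.range (fP p m)) := by
    rintro (⟨r, h⟩ | ⟨v, h⟩ | ⟨i, h⟩)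
    · exact fE_apply_one p m hm r (by rw [h]; rfl)
    · exact fG_apply_zero p m v (by rw [h]; rfl)
    · exact fP_apply_one p m hm i (by rw [h]; rfl)
  rw [S0, Set.ncard_insert_of_notMem hbot (by exact (hfin1.union (hfin2.union hfin3)))]
  rw [Set.ncard_union_eq hdE hfin1 (hfin2.union hfin3)]
  rw [Set.ncard_union_eq hdGP hfin2 hfin3]
  have e1 : (Set.range (fE p m)).ncard = p := by
    rw [← Set.image_univ, Set.ncard_image_of_injective _ (fE_injective p m hm),
      Set.ncard_univ, Nat.card_zmod]
  have e2 : (Set.range (fG p m)).ncard = m * p := by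
    rw [← Set.image_univ, Set.ncard_image_of_injective _ (fG_injective p m),
      Set.ncard_univ, Nat.card_prod, Nat.card_zmod, Nat.card_zmod]
  have e3 : (Set.range (fP p m)).ncard = (m - 2) * p := by
    rw [← Set.image_univ, Set.ncard_image_of_injective _ (fP_injective p m hm),
      Set.ncard_univ, Nat.card_prod, Nat.card_zmod, Nat.card_eq_fintype_card,
      Fintype.card_fin]
  rw [e1, e2, e3, add_comm]

end Card

section Conj
variable (n : ℕ) (e : Fin n ≃ B p m)

def conj (A : PEquiv (B p m) (B p m)) : PEquiv (Fin n) (Fin n) :=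
  (e.toPEquiv.trans A).trans e.symm.toPEquiv

lemma conj_apply (A : PEquiv (B p m) (B p m)) (x : Fin n) :
    conj p m n e A x = (A (e x)).map e.symm := by
  show ((e.toPEquiv.trans A).trans e.symm.toPEquiv) x = _
  rw [trans_apply, trans_apply, Equiv.toPEquiv_apply, Option.bind_some]
  cases A (e x) <;> rfl

lemma conj_trans (A A' : PEquiv (B p m) (B p m)) :
    (conj p m n e A).trans (conj p m n e A') = conj p m n e (A.trans A') := by
  have key : e.symm.toPEquiv.trans e.toPEquiv = PEquiv.refl (B p m) := by
    rw [← Equiv.toPEquiv_trans, Equiv.symm_trans_self, Equiv.toPEquiv_refl]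
  unfold conj
  simp only [PEquiv.trans_assoc]
  rw [← PEquiv.trans_assoc e.symm.toPEquiv e.toPEquiv, key, PEquiv.refl_trans]

lemma conj_injective : Function.Injective (conj p m n e) := by
  intro A A' h
  ext y z
  have h1 := DFunLike.congr_fun h (e.symm y)
  rw [conj_apply, conj_apply, Equiv.apply_symm_apply] at h1
  rw [Option.map_injective e.symm.injective h1]

end Conj

end STCore

open STCore in
/-- for every proper divisor `p` of `n ≥ 2` there is a semitransitive
subsemigroup of the singular part `I_n \ S_n` of cardinality exactly `2n - p + 1`. -/
theorem stmt1 (n p : ℕ) (hn : 2 ≤ n) (hpd : p ∣ n) (hplt : p < n) :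
    ∃ S : Set (ISemi n),
      IsSubsemigroup S ∧ (∀ φ ∈ S, IsSingular φ) ∧ Semitransitive S ∧
        S.ncard = 2 * n - p + 1 := by
  have hp : p ≠ 0 := by
    rintro rfl
    rw [zero_dvd_iff] at hpd
    omega
  obtain ⟨m, hnm⟩ := hpd
  have hm : 2 ≤ m := by
    rcases m with _ | _ | m
    · omega
    · omega
    · omega
  haveI : NeZero p := ⟨hp⟩
  haveI : NeZero m := ⟨by omega⟩
  have ecard : Fintype.card (Fin n) = Fintype.card (B p m) := by
    simp [ZMod.card, hnm, mul_comm]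
  let e : Fin n ≃ B p m := Fintype.equivOfCardEq ecard
  refine ⟨conj p m n e '' S0 p m, ?_, ?_, ?_, ?_⟩
  · rintro a ⟨A, hA, rfl⟩ b ⟨A', hA', rfl⟩
    rw [conj_trans]
    exact ⟨_, S0_closed p m hm hA hA', rfl⟩
  · rintro φ ⟨A, hA, rfl⟩
    obtain ⟨x, hx⟩ := S0_singular p m hm hA
    exact ⟨e.symm x, by rw [conj_apply, Equiv.apply_symm_apply, hx]; rfl⟩
  · intro x y
    obtain ⟨A, hA, hor⟩ := S0_semitrans p m hm (e x) (e y)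
    refine ⟨conj p m n e A, ⟨A, hA, rfl⟩, ?_⟩
    rcases hor with h | h
    · left; rw [conj_apply, h]; simp
    · right; rw [conj_apply, h]; simp
  · rw [Set.ncard_image_of_injective _ (conj_injective p m n e), ncard_S0 p m hm]
    obtain ⟨c, rfl⟩ : ∃ c, m = c + 2 := ⟨m - 2, by omega⟩
    rw [hnm]
    have h5 : c + 2 - 2 = c := rfl
    rw [h5]
    have h6 : 2 * (p * (c + 2)) = 2 * p * c + 4 * p := by ring
    rw [h6]
    have h7 : 2 * p * c + 4 * p - p + 1 = 2 * p * c + 3 * p + 1 := by omega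
    rw [h7]
    ring
end

section
/- Let S be a semitransitive subsemigroup of the singular part I_n \ S_n with |S| ≤ 2n. Then S contains exactly two non-zero idempotents g and h; moreover the domains of g and h are disjoint and their union is the whole underlying n-element set X. -/
namespace Stmt3Aux

instance isemiFinite (n : ℕ) : Finite (ISemi n) :=
  Finite.of_injective (fun f => (f : Fin n → Option (Fin n))) DFunLike.coe_injective

variable {n : ℕ}

lemma trans_apply (f g : ISemi n) (a : Fin n) : (f.trans g) a = (f a).bind g := rfl

lemma pePow_succ (φ : ISemi n) (k : ℕ) : pePow φ (k+1) = (pePow φ k).trans φ := rfl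

lemma pePow_one (φ : ISemi n) : pePow φ 1 = φ := by
  show (PEquiv.refl (Fin n)).trans φ = φ
  exact PEquiv.refl_trans φ

lemma pePow_add (φ : ISemi n) (a b : ℕ) :
    pePow φ (a + b) = (pePow φ a).trans (pePow φ b) := by
  induction b with
  | zero => show pePow φ a = (pePow φ a).trans (PEquiv.refl (Fin n)); rw [PEquiv.trans_refl]
  | succ b ih =>
      show pePow φ ((a + b) + 1) = (pePow φ a).trans ((pePow φ b).trans φ)
      rw [pePow_succ, ih, PEquiv.trans_assoc]

lemma pePow_succ' (φ : ISemi n) (k : ℕ) : pePow φ (k+1) = φ.trans (pePow φ k) := by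
  have h := pePow_add φ 1 k
  rw [Nat.add_comm 1 k] at h
  rw [h, pePow_one]

lemma pePow_fix {φ : ISemi n} {x : Fin n} (h : φ x = some x) (k : ℕ) :
    (pePow φ k) x = some x := by
  induction k with
  | zero => rfl
  | succ k ih => rw [pePow_succ, trans_apply, ih]; simpa using h

lemma exists_idem_pow (φ : ISemi n) :
    ∃ k, 1 ≤ k ∧ (pePow φ k).trans (pePow φ k) = pePow φ k := by
  obtain ⟨i, j, hne, hij⟩ := Finite.exists_ne_map_eq_of_infinite (fun k : ℕ => pePow φ k)
  wlog hlt : i < j generalizing i j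
  · exact this j i hne.symm hij.symm (by omega)
  set d := j - i with hd
  have hd1 : 1 ≤ d := by omega
  have hstep : ∀ s : ℕ, pePow φ (i + d + s) = pePow φ (i + s) := by
    intro s
    have h1 : pePow φ (i + d) = pePow φ i := by
      have : i + d = j := by omega
      rw [this, ← hij]
    rw [pePow_add φ (i+d) s, h1, ← pePow_add]
  have hshift : ∀ m s : ℕ, pePow φ (i + s + m * d) = pePow φ (i + s) := by
    intro m
    induction m with
    | zero => intro s; simp
    | succ m ih =>
        intro s
        have : i + s + (m+1) * d = i + d + (s + m * d) := by ring
        rw [this, hstep, ← Nat.add_assoc, ih]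
  refine ⟨(i+1) * d, ?_, ?_⟩
  · have := Nat.mul_le_mul (Nat.succ_le_succ (Nat.zero_le i)) hd1
    simpa using this
  · have hki : i + 1 ≤ (i+1)*d := Nat.le_mul_of_pos_right (i+1) (by omega)
    rw [← pePow_add]
    have hs : (i+1)*d + (i+1)*d = i + ((i+1)*d - i) + (i+1) * d := by omega
    rw [hs, hshift (i+1) ((i+1)*d - i)]
    congr 1
    omega
def pdom (f : ISemi n) : Set (Fin n) := {x | (f x).isSome}

lemma inj' {f : ISemi n} {a b : Fin n} {c : Fin n} (h1 : f a = some c) (h2 : f b = some c) :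
    a = b :=
  PEquiv.inj f (by simpa using h1) (by simpa using h2)

lemma idem_spec {e : ISemi n} (he : e.trans e = e) {p q : Fin n} (h : e p = some q) : q = p := by
  have h2 : e q = some q := by
    have h3 : (e.trans e) p = e p := by rw [he]
    rw [trans_apply, h] at h3
    simpa [h] using h3
  exact inj' h2 h

lemma idem_some {e : ISemi n} (he : e.trans e = e) {p : Fin n} (h : p ∈ pdom e) :
    e p = some p := by
  obtain ⟨q, hq⟩ := Option.isSome_iff_exists.mp h
  rwa [idem_spec he hq] at hq

lemma mem_pdom {e : ISemi n} {p q : Fin n} (h : e p = some q) : p ∈ pdom e := by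
  simp [pdom, h]

lemma ne_bot_iff {f : ISemi n} : f ≠ ⊥ ↔ ∃ a b, f a = some b := by
  constructor
  · intro h
    by_contra hc
    push_neg at hc
    exact h (PEquiv.ext fun a => by
      cases ha : f a with
      | none => simp [PEquiv.bot_apply]
      | some b => exact absurd ha (hc a b))
  · rintro ⟨a, b, h⟩ hb
    rw [hb, PEquiv.bot_apply] at h
    cases h

lemma idem_ext {e f : ISemi n} (he : e.trans e = e) (hf : f.trans f = f)
    (h : pdom e = pdom f) : e = f := by
  apply PEquiv.ext
  intro a
  by_cases ha : a ∈ pdom e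
  · rw [idem_some he ha, idem_some hf (h ▸ ha)]
  · have ha' : a ∉ pdom f := h ▸ ha
    rw [Option.not_isSome_iff_eq_none.mp ha, Option.not_isSome_iff_eq_none.mp ha']

lemma trans_idem_some {e f : ISemi n} (he : e.trans e = e) (hf : f.trans f = f)
    {x y : Fin n} (h : (e.trans f) x = some y) :
    y = x ∧ e x = some x ∧ f x = some x := by
  rw [trans_apply, Option.bind_eq_some_iff] at h
  obtain ⟨w, hw, hfw⟩ := h
  have hwx : w = x := idem_spec he hw
  subst hwx
  have hyw : y = w := idem_spec hf hfw
  subst hyw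
  exact ⟨rfl, hw, hfw⟩

lemma trans_idem_some' {e f : ISemi n} {x : Fin n}
    (hx : e x = some x) (hx' : f x = some x) : (e.trans f) x = some x := by
  rw [trans_apply, hx]
  simpa using hx'

lemma trans_idem {e f : ISemi n} (he : e.trans e = e) (hf : f.trans f = f) :
    (e.trans f).trans (e.trans f) = e.trans f := by
  apply PEquiv.ext
  intro a
  cases h : (e.trans f) a with
  | none => rw [trans_apply, h]; rfl
  | some y =>
      obtain ⟨hyx, hex, hfx⟩ := trans_idem_some he hf h
      subst hyx
      rw [trans_apply, h]
      simpa using h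

def domle (ν : ISemi n) (D : Set (Fin n)) : Prop := ∀ y z, ν y = some z → y ∈ D

def imle (ν : ISemi n) (D : Set (Fin n)) : Prop := ∀ y z, ν y = some z → z ∈ D

lemma pePow_mem {S : Set (ISemi n)} (hsub : ∀ a ∈ S, ∀ b ∈ S, a.trans b ∈ S)
    {φ : ISemi n} (hφ : φ ∈ S) : ∀ k, 1 ≤ k → pePow φ k ∈ S := by
  intro k
  induction k with
  | zero => omega
  | succ k ih =>
      intro _
      rcases Nat.eq_zero_or_pos k with hk | hk
      · subst hk; rw [pePow_one]; exact hφ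
      · rw [pePow_succ]; exact hsub _ (ih hk) _ hφ

lemma pePow_imle {ν : ISemi n} {M : Set (Fin n)} (h : imle ν M) :
    ∀ k, 1 ≤ k → imle (pePow ν k) M := by
  intro k
  induction k with
  | zero => omega
  | succ k ih =>
      intro _
      rcases Nat.eq_zero_or_pos k with hk | hk
      · subst hk; rw [pePow_one]; exact h
      · rw [pePow_succ]
        intro y z hz
        rw [trans_apply, Option.bind_eq_some_iff] at hz
        obtain ⟨w, _, hw2⟩ := hz
        exact h w z hw2

lemma pePow_domle {ν : ISemi n} {M : Set (Fin n)} (h : domle ν M) :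
    ∀ k, 1 ≤ k → domle (pePow ν k) M := by
  intro k
  induction k with
  | zero => omega
  | succ k ih =>
      intro _
      rcases Nat.eq_zero_or_pos k with hk | hk
      · subst hk; rw [pePow_one]; exact h
      · rw [pePow_succ']
        intro y z hz
        rw [trans_apply, Option.bind_eq_some_iff] at hz
        obtain ⟨w, hw1, _⟩ := hz
        exact h y w hw1

variable {S : Set (ISemi n)}

lemma exists_fix_idem (hsub : ∀ a ∈ S, ∀ b ∈ S, a.trans b ∈ S)
    (hst : ∀ x y : Fin n, ∃ φ ∈ S, φ x = some y ∨ φ y = some x) (x : Fin n) :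
    ∃ e ∈ S, e.trans e = e ∧ e x = some x := by
  obtain ⟨φ, hφ, hor⟩ := hst x x
  have hfix : φ x = some x := by rcases hor with h | h <;> exact h
  obtain ⟨k, hk1, hidem⟩ := exists_idem_pow φ
  exact ⟨pePow φ k, pePow_mem hsub hφ k hk1, hidem, pePow_fix hfix k⟩

lemma exists_least_idem (hsub : ∀ a ∈ S, ∀ b ∈ S, a.trans b ∈ S)
    (hst : ∀ x y : Fin n, ∃ φ ∈ S, φ x = some y ∨ φ y = some x) (x : Fin n) :
    ∃ e, e ∈ S ∧ e.trans e = e ∧ e x = some x ∧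
      ∀ f ∈ S, f.trans f = f → f x = some x → pdom e ⊆ pdom f := by
  classical
  set T : Set (ISemi n) := {f | f ∈ S ∧ f.trans f = f ∧ f x = some x} with hT
  have hTne : T.Nonempty := by
    obtain ⟨e, h1, h2, h3⟩ := exists_fix_idem hsub hst x
    exact ⟨e, h1, h2, h3⟩
  obtain ⟨e, heT, hemin⟩ : ∃ e ∈ T, ∀ f ∈ T, (pdom f).ncard ≤ (pdom e).ncard →
      (pdom e).ncard = (pdom f).ncard := by
    obtain ⟨e, heT, hm⟩ := exists_minimalFor_of_wellFoundedLT (· ∈ T) (fun f => (pdom f).ncard) hTne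
    exact ⟨e, heT, fun f hf hle => le_antisymm (hm hf hle) hle⟩
  refine ⟨e, heT.1, heT.2.1, heT.2.2, ?_⟩
  intro f hf hfi hfx
  have hgT : e.trans f ∈ T :=
    ⟨hsub _ heT.1 _ hf, trans_idem heT.2.1 hfi, trans_idem_some' heT.2.2 hfx⟩
  have hsub1 : pdom (e.trans f) ⊆ pdom e := by
    intro a ha
    obtain ⟨y, hy⟩ := Option.isSome_iff_exists.mp ha
    obtain ⟨_, h2, _⟩ := trans_idem_some heT.2.1 hfi hy
    exact mem_pdom h2
  have hcardle : (pdom (e.trans f)).ncard ≤ (pdom e).ncard :=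
    Set.ncard_le_ncard hsub1 (Set.toFinite _)
  have heq' := hemin _ hgT hcardle
  have heq : pdom (e.trans f) = pdom e :=
    Set.eq_of_subset_of_ncard_le hsub1 (le_of_eq heq') (Set.toFinite _)
  intro a ha
  have ha' : a ∈ pdom (e.trans f) := heq ▸ ha
  have h2 := idem_some hgT.2.1 ha'
  obtain ⟨_, _, h3⟩ := trans_idem_some heT.2.1 hfi h2
  exact mem_pdom h3

lemma exists_top {R : Fin n → Fin n → Prop}
    (htot : ∀ x y, R x y ∨ R y x) (htrans : ∀ {x y z}, R x y → R y z → R x z)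
    (s : Finset (Fin n)) (hs : s.Nonempty) : ∃ a ∈ s, ∀ b ∈ s, R a b := by
  classical
  induction s using Finset.induction_on with
  | empty => simp at hs
  | @insert x s hx ih =>
      rcases s.eq_empty_or_nonempty with rfl | hne
      · refine ⟨x, Finset.mem_insert_self _ _, ?_⟩
        intro b hb
        have : b = x := by simpa using hb
        subst this
        rcases htot b b with h | h <;> exact h
      · obtain ⟨a, haS, hatop⟩ := ih hne
        rcases htot x a with h | h
        · refine ⟨x, Finset.mem_insert_self _ _, ?_⟩
          intro b hb
          rcases Finset.mem_insert.mp hb with rfl | hbS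
          · rcases htot b b with hh | hh <;> exact hh
          · exact htrans h (hatop b hbS)
        · refine ⟨a, Finset.mem_insert_of_mem haS, ?_⟩
          intro b hb
          rcases Finset.mem_insert.mp hb with rfl | hbS
          · exact h
          · exact hatop b hbS

lemma bot_mem (hn : 1 ≤ n) (hsub : ∀ a ∈ S, ∀ b ∈ S, a.trans b ∈ S)
    (hsing : ∀ φ ∈ S, ∃ x, φ x = none)
    (hst : ∀ x y : Fin n, ∃ φ ∈ S, φ x = some y ∨ φ y = some x) :
    (⊥ : ISemi n) ∈ S := by
  classical
  by_contra hb
  obtain ⟨e, heS, hei, hex⟩ := exists_fix_idem hsub hst ⟨0, hn⟩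
  set T : Set (ISemi n) := {f | f ∈ S ∧ f.trans f = f ∧ f ≠ ⊥} with hT
  have heT : e ∈ T := ⟨heS, hei, ne_bot_iff.mpr ⟨_, _, hex⟩⟩
  obtain ⟨m, hmT, hmmin⟩ : ∃ m ∈ T, ∀ f ∈ T, (pdom f).ncard ≤ (pdom m).ncard →
      (pdom m).ncard = (pdom f).ncard := by
    obtain ⟨m, hmT, hm⟩ :=
      exists_minimalFor_of_wellFoundedLT (· ∈ T) (fun f => (pdom f).ncard) ⟨e, heT⟩
    exact ⟨m, hmT, fun f hf hle => le_antisymm (hm hf hle) hle⟩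
  set M := pdom m with hM
  have hMsub : ∀ f ∈ T, M ⊆ pdom f := by
    intro f hf
    have hgS : m.trans f ∈ S := hsub _ hmT.1 _ hf.1
    have hgne : m.trans f ≠ ⊥ := fun hh => hb (hh ▸ hgS)
    have hgT : m.trans f ∈ T := ⟨hgS, trans_idem hmT.2.1 hf.2.1, hgne⟩
    have hsub1 : pdom (m.trans f) ⊆ M := by
      intro a ha
      obtain ⟨y, hy⟩ := Option.isSome_iff_exists.mp ha
      obtain ⟨_, h2, _⟩ := trans_idem_some hmT.2.1 hf.2.1 hy
      exact mem_pdom h2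
    have hcardle : (pdom (m.trans f)).ncard ≤ M.ncard :=
      Set.ncard_le_ncard hsub1 (Set.toFinite _)
    have heq' := hmmin _ hgT hcardle
    have heq : pdom (m.trans f) = M :=
      Set.eq_of_subset_of_ncard_le hsub1 (le_of_eq heq') (Set.toFinite _)
    intro a ha
    have ha' : a ∈ pdom (m.trans f) := heq ▸ ha
    have h2 := idem_some hgT.2.1 ha'
    obtain ⟨_, _, h3⟩ := trans_idem_some hmT.2.1 hf.2.1 h2
    exact mem_pdom h3
  obtain ⟨a0, b0, hab⟩ := ne_bot_iff.mp hmT.2.2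
  have hlM : a0 ∈ M := mem_pdom hab
  set l := a0
  have hml : m l = some l := idem_some hmT.2.1 hlM
  obtain ⟨xo, hxo⟩ := hsing m hmT.1
  have hxoM : xo ∉ M := by simp [hM, pdom, hxo]
  obtain ⟨φ, hφS, hor⟩ := hst xo l
  rcases hor with h1 | h1
  · -- φ xo = some l : use ν = φ.trans m
    set ν : ISemi n := φ.trans m with hν
    have hνS : ν ∈ S := hsub _ hφS _ hmT.1
    have hνxo : ν xo = some l := by rw [hν, trans_apply, h1]; simpa using hml
    have hνim : imle ν M := by
      intro y z h
      rw [hν, trans_apply, Option.bind_eq_some_iff] at h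
      obtain ⟨w, _, hw2⟩ := h
      have hzw := idem_spec hmT.2.1 hw2
      subst hzw
      exact mem_pdom hw2
    obtain ⟨k, hk1, hki⟩ := exists_idem_pow ν
    set ψ := pePow ν k with hψ
    have hψS : ψ ∈ S := pePow_mem hsub hνS k hk1
    have hψne : ψ ≠ ⊥ := by
      intro hh
      exact hb (hh ▸ hψS)
    have hψT : ψ ∈ T := ⟨hψS, hki, hψne⟩
    have hψsub : pdom ψ ⊆ M := by
      intro a ha
      exact pePow_imle hνim k hk1 a a (idem_some hki ha)
    have hMψ : M ⊆ pdom ψ := hMsub ψ hψT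
    have hway1 : (pePow ν (k+1)) xo = none := by
      rw [pePow_succ, trans_apply]
      have : ψ xo = none := Option.not_isSome_iff_eq_none.mp (fun hh => hxoM (hψsub hh))
      rw [← hψ, this]
      rfl
    have hway2 : (pePow ν (k+1)) xo = some l := by
      rw [pePow_succ', trans_apply, hνxo]
      have : ψ l = some l := idem_some hki (hMψ hlM)
      rw [← hψ] at *
      simpa using this
    rw [hway1] at hway2
    cases hway2
  · -- φ l = some xo : use ρ = m.trans φ
    set ρ : ISemi n := m.trans φ with hρ
    have hρS : ρ ∈ S := hsub _ hmT.1 _ hφS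
    have hρl : ρ l = some xo := by rw [hρ, trans_apply, hml]; simpa using h1
    have hρdom : domle ρ M := by
      intro y z h
      rw [hρ, trans_apply, Option.bind_eq_some_iff] at h
      obtain ⟨w, hw1, _⟩ := h
      exact mem_pdom hw1
    obtain ⟨k, hk1, hki⟩ := exists_idem_pow ρ
    set ψ := pePow ρ k with hψ
    have hψS : ψ ∈ S := pePow_mem hsub hρS k hk1
    have hψne : ψ ≠ ⊥ := by
      intro hh
      exact hb (hh ▸ hψS)
    have hψT : ψ ∈ T := ⟨hψS, hki, hψne⟩
    have hψsub : pdom ψ ⊆ M := by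
      intro a ha
      exact pePow_domle hρdom k hk1 a a (idem_some hki ha)
    have hMψ : M ⊆ pdom ψ := hMsub ψ hψT
    have hway1 : (pePow ρ (k+1)) l = some xo := by
      rw [pePow_succ, trans_apply]
      have : ψ l = some l := idem_some hki (hMψ hlM)
      rw [← hψ, this]
      simpa using hρl
    have hway2 : (pePow ρ (k+1)) l = none := by
      rw [pePow_succ', trans_apply, hρl]
      have : ψ xo = none := Option.not_isSome_iff_eq_none.mp (fun hh => hxoM (hψsub hh))
      rw [← hψ]
      simpa using this
    rw [hway1] at hway2
    cases hway2

lemma disc {D : Fin n → Set (Fin n)} (hDsub : ∀ p x, p ∈ D x → D p ⊆ D x)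
    {ν : ISemi n} {k l k' l' p q p' q' : Fin n}
    (h1 : domle ν (D k)) (h2 : imle ν (D l)) (h3 : ν p = some q)
    (h4 : D p = D k) (h5 : D q = D l)
    (h1' : domle ν (D k')) (h2' : imle ν (D l')) (h3' : ν p' = some q')
    (h4' : D p' = D k') (h5' : D q' = D l') :
    D k = D k' ∧ D l = D l' := by
  have e1 : D p ⊆ D k' := hDsub _ _ (h1' _ _ h3)
  have e2 : D p' ⊆ D k := hDsub _ _ (h1 _ _ h3')
  have f1 : D q ⊆ D l' := hDsub _ _ (h2' _ _ h3)
  have f2 : D q' ⊆ D l := hDsub _ _ (h2 _ _ h3')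
  rw [h4] at e1
  rw [h4'] at e2
  rw [h5] at f1
  rw [h5'] at f2
  exact ⟨Set.Subset.antisymm e1 e2, Set.Subset.antisymm f1 f2⟩

lemma localize_domle {e φ f : ISemi n} (he : e.trans e = e) :
    domle ((e.trans φ).trans f) (pdom e) := by
  intro y z h
  rw [trans_apply, Option.bind_eq_some_iff] at h
  obtain ⟨w, hw, _⟩ := h
  rw [trans_apply, Option.bind_eq_some_iff] at hw
  obtain ⟨u, hu, _⟩ := hw
  exact mem_pdom hu

lemma localize_imle {e φ f : ISemi n} (hf : f.trans f = f) :
    imle ((e.trans φ).trans f) (pdom f) := by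
  intro y z h
  rw [trans_apply, Option.bind_eq_some_iff] at h
  obtain ⟨w, _, hw⟩ := h
  have := idem_spec hf hw
  subst this
  exact mem_pdom hw

lemma localize_val {e φ f : ISemi n} {p q : Fin n}
    (hep : e p = some p) (hφp : φ p = some q) (hfq : f q = some q) :
    ((e.trans φ).trans f) p = some q := by
  have h1 : (e.trans φ) p = some q := by
    rw [trans_apply, hep]
    simpa using hφp
  rw [trans_apply, h1]
  simpa using hfq

end Stmt3Aux

open Stmt3Aux


/-- a semitransitive subsemigroup `S` of the singular part with
`|S| ≤ 2n` contains exactly two non-zero idempotents `g, h`; their domains are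
disjoint and cover the whole underlying set. -/
theorem stmt3 (n : ℕ) (hn : 1 ≤ n) (S : Set (ISemi n))
    (hsub : IsSubsemigroup S)
    (hsing : ∀ φ ∈ S, IsSingular φ)
    (hst : Semitransitive S)
    (hcard : S.ncard ≤ 2 * n) :
    ∃ g h : ISemi n, g ∈ S ∧ h ∈ S ∧ g ≠ h ∧
      g.trans g = g ∧ h.trans h = h ∧ g ≠ ⊥ ∧ h ≠ ⊥ ∧
      (∀ e ∈ S, e.trans e = e → e ≠ ⊥ → e = g ∨ e = h) ∧
      (∀ x : Fin n, ¬((g x).isSome ∧ (h x).isSome)) ∧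
      (∀ x : Fin n, (g x).isSome ∨ (h x).isSome) := by
  classical
  have hsub' : ∀ a ∈ S, ∀ b ∈ S, a.trans b ∈ S := hsub
  have hst' : ∀ x y : Fin n, ∃ φ ∈ S, φ x = some y ∨ φ y = some x := hst
  have hsing' : ∀ φ ∈ S, ∃ x, φ x = none := hsing
  -- least idempotents
  choose lex hlexS hlexI hlexFix hlexLeast using fun x => exists_least_idem hsub' hst' x
  have hmemD : ∀ x, x ∈ pdom (lex x) := fun x => mem_pdom (hlexFix x)
  have hDsub : ∀ p x : Fin n, p ∈ pdom (lex x) → pdom (lex p) ⊆ pdom (lex x) :=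
    fun p x hp => hlexLeast p (lex x) (hlexS x) (hlexI x) (idem_some (hlexI x) hp)
  have hkey : ∀ f ∈ S, f.trans f = f → ∀ p, f p = some p → pdom (lex p) ⊆ pdom f :=
    fun f hf hfi p hp => hlexLeast p f hf hfi hp
  have hnuniv : ∀ x, pdom (lex x) ≠ Set.univ := by
    intro x hcontra
    obtain ⟨z, hz⟩ := hsing' (lex x) (hlexS x)
    have : z ∈ pdom (lex x) := hcontra ▸ Set.mem_univ z
    rw [pdom, Set.mem_setOf_eq, hz] at this
    simp at this
  -- STGe facts
  have hSTtot : ∀ x y, STGe S x y ∨ STGe S y x := by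
    intro x y
    obtain ⟨φ, hφ, hor⟩ := hst' x y
    rcases hor with h | h
    · exact Or.inl ⟨φ, hφ, h⟩
    · exact Or.inr ⟨φ, hφ, h⟩
  have hSTtrans : ∀ {x y z : Fin n}, STGe S x y → STGe S y z → STGe S x z := by
    rintro x y z ⟨φ, hφ, h1⟩ ⟨ψ, hψ, h2⟩
    refine ⟨φ.trans ψ, hsub' _ hφ _ hψ, ?_⟩
    rw [trans_apply, h1]
    simpa using h2
  by_cases h3c : ∃ x₁ x₂ x₃ : Fin n, pdom (lex x₁) ≠ pdom (lex x₂) ∧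
      pdom (lex x₁) ≠ pdom (lex x₃) ∧ pdom (lex x₂) ≠ pdom (lex x₃)
  · -- at least three classes: contradiction with cardinality
    exfalso
    obtain ⟨x₁, x₂, x₃, h12, h13, h23⟩ := h3c
    have hbot : (⊥ : ISemi n) ∈ S := bot_mem hn hsub' hsing' hst'
    -- anchor function
    have hclEx : ∀ D : Set (Fin n), ∃ a : Fin n,
        (∃ x, pdom (lex x) = D) → (pdom (lex a) = D ∧ ∀ y, pdom (lex y) = D → STGe S a y) := by
      intro D
      by_cases hD : ∃ x, pdom (lex x) = D
      · obtain ⟨x, hx⟩ := hD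
        have hsne : (Finset.univ.filter (fun y => pdom (lex y) = D)).Nonempty :=
          ⟨x, by simp [hx]⟩
        obtain ⟨a, has, hatop⟩ := exists_top hSTtot hSTtrans _ hsne
        have haD : pdom (lex a) = D := by simpa using has
        exact ⟨a, fun _ => ⟨haD, fun y hy => hatop y (by simp [hy])⟩⟩
      · exact ⟨x₁, fun hx => absurd hx hD⟩
    choose cl hcl using hclEx
    have hAex : ∃ A : Fin n → Fin n,
        (∀ x, pdom (lex (A x)) = pdom (lex x)) ∧
        (∀ x y, pdom (lex y) = pdom (lex x) → STGe S (A x) y) ∧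
        (∀ x y, pdom (lex x) = pdom (lex y) → A x = A y) :=
      ⟨fun x => cl (pdom (lex x)),
        fun x => (hcl _ ⟨x, rfl⟩).1,
        fun x y hy => (hcl _ ⟨x, rfl⟩).2 y hy,
        fun x y h => congrArg cl h⟩
    obtain ⟨A, hA1, hA2, hAconst⟩ := hAex
    -- the partner-class map σ
    have hσex : ∃ σ : Fin n → Fin n,
        (∀ x y, pdom (lex x) = pdom (lex y) → σ x = σ y) ∧
        (∀ x, pdom (lex (σ x)) ≠ pdom (lex x)) ∧
        (∀ x y, pdom (lex x) ≠ pdom (lex y) → pdom (lex (σ x)) = pdom (lex y) →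
          pdom (lex (σ y)) = pdom (lex x) → False) := by
      refine ⟨fun x => if pdom (lex x) = pdom (lex x₁) then x₂
        else if pdom (lex x) = pdom (lex x₂) then x₃ else x₁, ?_, ?_, ?_⟩
      · intro x y h
        simp only [h]
      · intro x
        by_cases hx1 : pdom (lex x) = pdom (lex x₁)
        · simp only [if_pos hx1]
          rw [hx1]
          exact fun hh => h12 hh.symm
        · by_cases hx2 : pdom (lex x) = pdom (lex x₂)
          · simp only [if_neg hx1, if_pos hx2]
            rw [hx2]
            exact fun hh => h23 hh.symm
          · simp only [if_neg hx1, if_neg hx2]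
            exact fun hh => hx1 hh.symm
      · intro x y hxy hσx hσy
        simp only at hσx hσy
        by_cases hx1 : pdom (lex x) = pdom (lex x₁)
        · rw [if_pos hx1] at hσx
          have hy1 : ¬(pdom (lex y) = pdom (lex x₁)) := by
            rw [← hσx]
            exact fun hh => h12 hh.symm
          have hy2 : pdom (lex y) = pdom (lex x₂) := hσx.symm
          rw [if_neg hy1, if_pos hy2] at hσy
          rw [hx1] at hσy
          exact h13 hσy.symm
        · by_cases hx2 : pdom (lex x) = pdom (lex x₂)
          · rw [if_neg hx1, if_pos hx2] at hσx
            have hy1 : ¬(pdom (lex y) = pdom (lex x₁)) := by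
              rw [← hσx]
              exact fun hh => h13 hh.symm
            have hy2 : ¬(pdom (lex y) = pdom (lex x₂)) := by
              rw [← hσx]
              exact fun hh => h23 hh.symm
            rw [if_neg hy1, if_neg hy2] at hσy
            rw [hx2] at hσy
            exact h12 hσy
          · rw [if_neg hx1, if_neg hx2] at hσx
            have hy1 : pdom (lex y) = pdom (lex x₁) := hσx.symm
            rw [if_pos hy1] at hσy
            exact hx2 hσy.symm
    obtain ⟨σ, hσconst, P1, P2⟩ := hσex
    -- within-class slots
    have hW : ∀ x : Fin n, ∃ ν : ISemi n, ν ∈ S ∧ domle ν (pdom (lex x)) ∧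
        imle ν (pdom (lex x)) ∧ ν (A x) = some x := by
      intro x
      obtain ⟨φ, hφS, hφval⟩ := hA2 x x rfl
      refine ⟨((lex (A x)).trans φ).trans (lex x),
        hsub' _ (hsub' _ (hlexS _) _ hφS) _ (hlexS x), ?_, localize_imle (hlexI x), ?_⟩
      · have hh := localize_domle (e := lex (A x)) (φ := φ) (f := lex x) (hlexI (A x))
        rw [hA1 x] at hh
        exact hh
      · exact localize_val (idem_some (hlexI (A x)) (hmemD (A x))) hφval
          (idem_some (hlexI x) (hmemD x))
    choose w hwS hwdom hwim hwval using hW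
    -- cross-class slots
    have hX : ∀ x : Fin n, ∃ ν : ISemi n, ν ∈ S ∧
        ((domle ν (pdom (lex x)) ∧ imle ν (pdom (lex (σ x))) ∧ ν x = some (A (σ x))) ∨
         (domle ν (pdom (lex (σ x))) ∧ imle ν (pdom (lex x)) ∧ ν (A (σ x)) = some x)) := by
      intro x
      obtain ⟨φ, hφS, hor⟩ := hst' x (A (σ x))
      rcases hor with h | h
      · refine ⟨((lex x).trans φ).trans (lex (A (σ x))),
          hsub' _ (hsub' _ (hlexS _) _ hφS) _ (hlexS _), Or.inl ⟨?_, ?_, ?_⟩⟩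
        · exact localize_domle (hlexI x)
        · have hh := localize_imle (e := lex x) (φ := φ) (hlexI (A (σ x)))
          rw [hA1 (σ x)] at hh
          exact hh
        · exact localize_val (idem_some (hlexI x) (hmemD x)) h
            (idem_some (hlexI (A (σ x))) (hmemD (A (σ x))))
      · refine ⟨((lex (A (σ x))).trans φ).trans (lex x),
          hsub' _ (hsub' _ (hlexS _) _ hφS) _ (hlexS _), Or.inr ⟨?_, ?_, ?_⟩⟩
        · have hh := localize_domle (e := lex (A (σ x))) (φ := φ) (f := lex x)
            (hlexI (A (σ x)))
          rw [hA1 (σ x)] at hh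
          exact hh
        · exact localize_imle (hlexI x)
        · exact localize_val (idem_some (hlexI (A (σ x))) (hmemD (A (σ x)))) h
            (idem_some (hlexI x) (hmemD x))
    choose χ hχS hχspec using hX
    -- the 2n+1 distinct elements
    let θ : Option (Fin n ⊕ Fin n) → ISemi n :=
      fun o => Option.elim o ⊥ (Sum.elim w χ)
    have hrange : ∀ o, θ o ∈ S := by
      rintro (_ | (a | a))
      · exact hbot
      · exact hwS a
      · exact hχS a
    have hbotval : ∀ (ν : ISemi n) (p q : Fin n), ν p = some q → (⊥ : ISemi n) ≠ ν := by
      intro ν p q hv hb2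
      rw [← hb2, PEquiv.bot_apply] at hv
      cases hv
    have hinj : Function.Injective θ := by
      rintro (_ | (a | a)) (_ | (b | b)) h
      · rfl
      · exact absurd (show (⊥ : ISemi n) = w b from h) (hbotval (w b) (A b) b (hwval b))
      · exfalso
        replace h : (⊥ : ISemi n) = χ b := h
        rcases hχspec b with ⟨_, _, hv⟩ | ⟨_, _, hv⟩
        · exact hbotval (χ b) b (A (σ b)) hv h
        · exact hbotval (χ b) (A (σ b)) b hv h
      · exact absurd (show w a = (⊥ : ISemi n) from h).symm
          (hbotval (w a) (A a) a (hwval a))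
      · -- w a = w b
        replace h : w a = w b := h
        have hdb := hwdom b
        have hib := hwim b
        have hvb := hwval b
        rw [← h] at hdb hib hvb
        have hd := disc (D := fun t => pdom (lex t)) hDsub
          (hwdom a) (hwim a) (hwval a) (hA1 a) rfl
          hdb hib hvb (hA1 b) rfl
        have hAeq : A a = A b := hAconst a b hd.1
        have h2 : w a (A a) = some b := by rw [hAeq]; exact hvb
        have hab2 : a = b := Option.some_injective _ ((hwval a).symm.trans h2)
        rw [hab2]
      · -- w a = χ b
        replace h : w a = χ b := h
        exfalso
        rcases hχspec b with ⟨hdb, hib, hvb⟩ | ⟨hdb, hib, hvb⟩ <;> rw [← h] at hdb hib hvb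
        · have hd := disc (D := fun t => pdom (lex t)) hDsub
            (hwdom a) (hwim a) (hwval a) (hA1 a) rfl
            hdb hib hvb rfl (hA1 (σ b))
          exact P1 b (hd.2.symm.trans hd.1)
        · have hd := disc (D := fun t => pdom (lex t)) hDsub
            (hwdom a) (hwim a) (hwval a) (hA1 a) rfl
            hdb hib hvb (hA1 (σ b)) rfl
          exact P1 b (hd.1.symm.trans hd.2)
      · -- χ a = ⊥
        exfalso
        replace h : χ a = (⊥ : ISemi n) := h
        rcases hχspec a with ⟨_, _, hv⟩ | ⟨_, _, hv⟩
        · exact hbotval (χ a) a (A (σ a)) hv h.symm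
        · exact hbotval (χ a) (A (σ a)) a hv h.symm
      · -- χ a = w b
        replace h : χ a = w b := h
        exfalso
        rcases hχspec a with ⟨hda, hia, hva⟩ | ⟨hda, hia, hva⟩
        · have hd := disc (D := fun t => pdom (lex t)) hDsub
            hda hia hva rfl (hA1 (σ a))
            (h ▸ hwdom b) (h ▸ hwim b) (h ▸ hwval b) (hA1 b) rfl
          exact P1 a (hd.2.trans hd.1.symm)
        · have hd := disc (D := fun t => pdom (lex t)) hDsub
            hda hia hva (hA1 (σ a)) rfl
            (h ▸ hwdom b) (h ▸ hwim b) (h ▸ hwval b) (hA1 b) rfl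
          exact P1 a (hd.1.trans hd.2.symm)
      · -- χ a = χ b
        replace h : χ a = χ b := h
        rcases hχspec a with ⟨hda, hia, hva⟩ | ⟨hda, hia, hva⟩ <;>
          rcases hχspec b with ⟨hdb, hib, hvb⟩ | ⟨hdb, hib, hvb⟩ <;>
          rw [← h] at hdb hib hvb
        · have hd := disc (D := fun t => pdom (lex t)) hDsub
            hda hia hva rfl (hA1 (σ a))
            hdb hib hvb rfl (hA1 (σ b))
          have hσeq : σ a = σ b := hσconst a b hd.1
          have hAeq : A (σ a) = A (σ b) := by rw [hσeq]
          have h2 : χ a b = some (A (σ a)) := by rw [hAeq]; exact hvb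
          have := inj' hva h2
          rw [this]
        · exfalso
          have hd := disc (D := fun t => pdom (lex t)) hDsub
            hda hia hva rfl (hA1 (σ a))
            hdb hib hvb (hA1 (σ b)) rfl
          have hne : pdom (lex a) ≠ pdom (lex b) := by
            intro hh
            exact P1 b (hd.1.symm.trans hh)
          exact P2 a b hne hd.2 hd.1.symm
        · exfalso
          have hd := disc (D := fun t => pdom (lex t)) hDsub
            hda hia hva (hA1 (σ a)) rfl
            hdb hib hvb rfl (hA1 (σ b))
          have hne : pdom (lex a) ≠ pdom (lex b) := by
            intro hh
            exact P1 b (hd.2.symm.trans hh)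
          exact P2 a b hne hd.1 hd.2.symm
        · have hd := disc (D := fun t => pdom (lex t)) hDsub
            hda hia hva (hA1 (σ a)) rfl
            hdb hib hvb (hA1 (σ b)) rfl
          have hσeq : σ a = σ b := hσconst a b hd.2
          have hAeq : A (σ a) = A (σ b) := by rw [hσeq]
          have h2 : χ a (A (σ a)) = some b := by rw [hAeq]; exact hvb
          have := Option.some_injective _ (hva.symm.trans h2)
          rw [this]
    -- cardinality contradiction
    have hinj2 : Function.Injective
        (fun o : Option (Fin n ⊕ Fin n) => (⟨θ o, hrange o⟩ : {f : ISemi n // f ∈ S})) :=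
      fun o₁ o₂ hh => hinj (congrArg Subtype.val hh)
    have hle := Nat.card_le_card_of_injective _ hinj2
    have hcoe : Nat.card {f : ISemi n // f ∈ S} = S.ncard := Nat.card_coe_set_eq S
    have hcnt : Nat.card (Option (Fin n ⊕ Fin n)) = 2 * n + 1 := by
      simp only [Nat.card_eq_fintype_card, Fintype.card_option, Fintype.card_sum,
        Fintype.card_fin]
      omega
    rw [hcoe, hcnt] at hle
    omega
  · -- at most two classes
    push_neg at h3c
    by_cases h2c : ∃ x y : Fin n, pdom (lex x) ≠ pdom (lex y)
    · obtain ⟨x₁, x₂, h12⟩ := h2c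
      have hcover2 : ∀ y, pdom (lex y) = pdom (lex x₁) ∨ pdom (lex y) = pdom (lex x₂) := by
        intro y
        by_cases hy : pdom (lex y) = pdom (lex x₁)
        · exact Or.inl hy
        · exact Or.inr (h3c x₁ y x₂ (fun hh => hy hh.symm) h12)
      have habs : ∀ v : Fin n, (∀ y, pdom (lex y) ⊆ pdom (lex v)) → False := by
        intro v hv
        apply hnuniv v
        apply Set.eq_univ_of_forall
        intro y
        exact hv y (hmemD y)
      refine ⟨lex x₁, lex x₂, hlexS x₁, hlexS x₂, ?_, hlexI x₁, hlexI x₂, ?_, ?_, ?_, ?_, ?_⟩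
      · intro hEq
        exact h12 (by rw [hEq])
      · exact ne_bot_iff.mpr ⟨x₁, x₁, hlexFix x₁⟩
      · exact ne_bot_iff.mpr ⟨x₂, x₂, hlexFix x₂⟩
      · -- uniqueness of idempotents
        intro e heS hei hene
        obtain ⟨a, b, hab⟩ := ne_bot_iff.mp hene
        have hba := idem_spec hei hab
        rw [hba] at hab
        clear hba
        by_cases hc1 : ∃ p, (e p).isSome ∧ pdom (lex p) = pdom (lex x₁)
        · by_cases hc2 : ∃ q, (e q).isSome ∧ pdom (lex q) = pdom (lex x₂)
          · exfalso
            obtain ⟨p, hp, hp1⟩ := hc1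
            obtain ⟨q, hq, hq2⟩ := hc2
            have hD1e : pdom (lex x₁) ⊆ pdom e := hp1 ▸ hkey e heS hei p (idem_some hei hp)
            have hD2e : pdom (lex x₂) ⊆ pdom e := hq2 ▸ hkey e heS hei q (idem_some hei hq)
            obtain ⟨z, hz⟩ := hsing' e heS
            have hzmem : z ∈ pdom e := by
              rcases hcover2 z with hh | hh
              · refine hD1e ?_
                have hm := hmemD z
                rw [hh] at hm
                exact hm
              · refine hD2e ?_
                have hm := hmemD z
                rw [hh] at hm
                exact hm
            rw [pdom, Set.mem_setOf_eq, hz] at hzmem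
            simp at hzmem
          · left
            push_neg at hc2
            apply idem_ext hei (hlexI x₁)
            apply Set.Subset.antisymm
            · intro p hp
              rcases hcover2 p with hh | hh
              · have hm := hmemD p
                rw [hh] at hm
                exact hm
              · exact absurd hh (hc2 p hp)
            · obtain ⟨p, hp, hp1⟩ := hc1
              exact hp1 ▸ hkey e heS hei p (idem_some hei hp)
        · right
          push_neg at hc1
          apply idem_ext hei (hlexI x₂)
          apply Set.Subset.antisymm
          · intro p hp
            rcases hcover2 p with hh | hh
            · exact absurd hh (hc1 p hp)
            · have hm := hmemD p
              rw [hh] at hm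
              exact hm
          · have ha2 : pdom (lex a) = pdom (lex x₂) := by
              rcases hcover2 a with hh | hh
              · exact absurd hh (hc1 a (mem_pdom hab))
              · exact hh
            exact ha2 ▸ hkey e heS hei a hab
      · -- disjointness
        intro x ⟨hgx, hhx⟩
        have hx1 : x ∈ pdom (lex x₁) := hgx
        have hx2 : x ∈ pdom (lex x₂) := hhx
        have hs1 : pdom (lex x) ⊆ pdom (lex x₁) := hDsub x x₁ hx1
        have hs2 : pdom (lex x) ⊆ pdom (lex x₂) := hDsub x x₂ hx2
        rcases hcover2 x with hh | hh
        · apply habs x₂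
          intro y
          rcases hcover2 y with hy | hy
          · rw [hy, ← hh]
            exact hs2
          · rw [hy]
        · apply habs x₁
          intro y
          rcases hcover2 y with hy | hy
          · rw [hy]
          · rw [hy, ← hh]
            exact hs1
      · -- cover
        intro x
        rcases hcover2 x with hh | hh
        · refine Or.inl ?_
          have hm := hmemD x
          rw [hh] at hm
          exact hm
        · refine Or.inr ?_
          have hm := hmemD x
          rw [hh] at hm
          exact hm
    · -- only one class: impossible
      exfalso
      push_neg at h2c
      apply hnuniv ⟨0, hn⟩
      apply Set.eq_univ_of_forall
      intro y
      have := h2c y ⟨0, hn⟩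
      exact this ▸ hmemD y
end

section
/- Let S be a semitransitive subsemigroup of the singular part I_n \ S_n with |S| ≤ 2n, and let ≥ be the semitransitivity preorder induced by S. If x, y ∈ X lie in the same transitivity block (i.e., x ≥ y and y ≥ x), then there exists α ∈ S with α(x) = y such that every u in the domain of α satisfies u ≥ α(u) and α(u) ≥ u (i.e., α has no arrows between distinct transitivity blocks). -/
theorem pePow_add {n : ℕ} (φ : ISemi n) (a b : ℕ) :
    pePow φ (a + b) = (pePow φ a).trans (pePow φ b) := by
  induction b with
  | zero => simp [pePow, PEquiv.trans_refl]
  | succ b ih =>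
    show pePow φ ((a + b) + 1) = _
    rw [pePow, ih, pePow, PEquiv.trans_assoc]

theorem pePow_mem {n : ℕ} {S : Set (ISemi n)} (hsub : IsSubsemigroup S)
    {φ : ISemi n} (hφ : φ ∈ S) : ∀ k, pePow φ (k + 1) ∈ S := by
  intro k
  induction k with
  | zero => simpa [pePow, PEquiv.refl_trans] using hφ
  | succ k ih => exact hsub _ ih _ hφ

theorem pePow_dom {n : ℕ} {φ : ISemi n} {u w : Fin n} {a b : ℕ}
    (h : pePow φ (a + b) u = some w) : ∃ z, pePow φ a u = some z := by
  rw [pePow_add, PEquiv.trans_eq_some] at h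
  obtain ⟨z, hz, _⟩ := h
  exact ⟨z, hz⟩

theorem pePow_mul_self {n : ℕ} {φ : ISemi n} {u : Fin n} {c : ℕ}
    (h : pePow φ c u = some u) : ∀ q, pePow φ (c * q) u = some u := by
  intro q
  induction q with
  | zero => rfl
  | succ q ih =>
    rw [Nat.mul_succ, pePow_add, PEquiv.trans_eq_some]
    exact ⟨u, ih, h⟩

theorem pePow_cancel {n : ℕ} {φ : ISemi n} {u z : Fin n} {i j : ℕ} (hij : i ≤ j)
    (hi : pePow φ i u = some z) (hj : pePow φ j u = some z) :
    pePow φ (j - i) u = some u := by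
  have hd : (j - i) + i = j := Nat.sub_add_cancel hij
  rw [← hd, pePow_add, PEquiv.trans_eq_some] at hj
  obtain ⟨w, hw, hwz⟩ := hj
  have : w = u := PEquiv.inj (pePow φ i) (Option.mem_def.2 hwz) (Option.mem_def.2 hi)
  rwa [this] at hw

theorem pePow_periodic {n : ℕ} {φ : ISemi n} {u w : Fin n}
    (h : pePow φ n u = some w) :
    ∃ c, 1 ≤ c ∧ c ≤ n ∧ pePow φ c u = some u := by
  have hz : ∀ i : Fin (n + 1), ∃ z, pePow φ i u = some z := by
    intro i
    have hle : (i : ℕ) ≤ n := Nat.le_of_lt_succ i.isLt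
    have : pePow φ ((i : ℕ) + (n - i)) u = some w := by
      rwa [Nat.add_sub_cancel' hle]
    exact pePow_dom this
  choose g hg using hz
  obtain ⟨i, j, hne, heq⟩ := Fintype.exists_ne_map_eq_of_card_lt g (by simp)
  rcases lt_or_gt_of_ne hne with hlt | hlt
  · refine ⟨(j : ℕ) - i, ?_, ?_, ?_⟩
    · omega
    · have := j.isLt; omega
    · exact pePow_cancel (le_of_lt hlt) (hg i) (heq ▸ hg j)
  · refine ⟨(i : ℕ) - j, ?_, ?_, ?_⟩
    · have : (j : ℕ) < i := hlt; omega
    · have := i.isLt; omega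
    · exact pePow_cancel (le_of_lt hlt) (hg j) (heq ▸ hg i)

/-- if `x, y` lie in the same transitivity block of a semitransitive
subsemigroup `S` of the singular part with `|S| ≤ 2n`, then some `α ∈ S` has an
arrow `x → y` and all its arrows stay within a single transitivity block. -/
theorem stmt4 (n : ℕ) (hn : 1 ≤ n) (S : Set (ISemi n))
    (hsub : IsSubsemigroup S)
    (hsing : ∀ φ ∈ S, IsSingular φ)
    (hst : Semitransitive S)
    (hcard : S.ncard ≤ 2 * n)
    (x y : Fin n) (hxy : STGe S x y) (hyx : STGe S y x) :
    ∃ α ∈ S, α x = some y ∧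
      ∀ u v : Fin n, α u = some v → STGe S u v ∧ STGe S v u := by
  obtain ⟨φ, hφS, hφx⟩ := hxy
  obtain ⟨ψ, hψS, hψy⟩ := hyx
  set β : ISemi n := φ.trans ψ with hβdef
  have hβS : β ∈ S := hsub φ hφS ψ hψS
  have hβx : β x = some x := by
    rw [hβdef, PEquiv.trans_eq_some]; exact ⟨y, hφx, hψy⟩
  have hβ1x : pePow β 1 x = some x := by
    show ((pePow β 0).trans β) x = some x
    rw [show pePow β 0 = PEquiv.refl (Fin n) from rfl, PEquiv.refl_trans]
    exact hβx
  have hex : pePow β n x = some x := by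
    have := pePow_mul_self hβ1x n
    rwa [one_mul] at this
  obtain ⟨m, hm⟩ : ∃ m, n = m + 1 := ⟨n - 1, by omega⟩
  have heS : pePow β n ∈ S := hm ▸ pePow_mem hsub hβS m
  refine ⟨(pePow β n).trans φ, hsub _ heS φ hφS, ?_, ?_⟩
  · rw [PEquiv.trans_eq_some]; exact ⟨x, hex, hφx⟩
  · intro u v huv
    have huv' := huv
    rw [PEquiv.trans_eq_some] at huv
    obtain ⟨w, hw, hφw⟩ := huv
    refine ⟨⟨(pePow β n).trans φ, hsub _ heS φ hφS, huv'⟩, ?_⟩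
    -- periodicity of u
    obtain ⟨c, hc1, hcn, hc⟩ := pePow_periodic hw
    have hccu : pePow β (c * (n + 2)) u = some u := pePow_mul_self hc (n + 2)
    have hle2 : n + 2 ≤ c * (n + 2) := by
      calc n + 2 = 1 * (n + 2) := by omega
        _ ≤ c * (n + 2) := Nat.mul_le_mul_right _ hc1
    have hle : n + 1 ≤ c * (n + 2) := by omega
    have hkeq : (n + 1) + (c * (n + 2) - (n + 1)) = c * (n + 2) :=
      Nat.add_sub_cancel' hle
    set k : ℕ := c * (n + 2) - (n + 1) with hkdef
    have hk1 : 1 ≤ k := by omega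
    -- pePow β (n+1) u = some z
    obtain ⟨z, hz⟩ : ∃ z, pePow β (n + 1) u = some z := by
      have : pePow β ((n + 1) + k) u = some u := by rw [hkeq]; exact hccu
      exact pePow_dom this
    -- β w = some z
    have hβw : β w = some z := by
      have hz' := hz
      rw [show pePow β (n + 1) = (pePow β n).trans β from rfl,
        PEquiv.trans_eq_some] at hz'
      obtain ⟨w', hw', hβw'⟩ := hz'
      rw [hw] at hw'
      rwa [← Option.some_injective _ hw'] at hβw'
    -- ψ v = some z
    have hψv : ψ v = some z := by
      rw [hβdef, PEquiv.trans_eq_some] at hβw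
      obtain ⟨v', hv', hψv'⟩ := hβw
      rw [hφw] at hv'
      rwa [← Option.some_injective _ hv'] at hψv'
    -- pePow β k z = some u
    have hkz : pePow β k z = some u := by
      have h := hccu
      rw [← hkeq, pePow_add, PEquiv.trans_eq_some] at h
      obtain ⟨z', hz', hk'⟩ := h
      rw [hz] at hz'
      rwa [← Option.some_injective _ hz'] at hk'
    obtain ⟨m', hm'⟩ : ∃ m', k = m' + 1 := ⟨k - 1, by omega⟩
    have hkS : pePow β k ∈ S := hm' ▸ pePow_mem hsub hβS m'
    refine ⟨ψ.trans (pePow β k), hsub ψ hψS _ hkS, ?_⟩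
    rw [PEquiv.trans_eq_some]
    exact ⟨z, hψv, hkz⟩
end

section
/- Let m ≥ 2 and let A and B be nonempty disjoint sets with A ∪ B = {1, 2, …, m}. Then the set of integer differences {j − i : i ∈ A, j ∈ B} has at least m − 1 elements. -/
open Finset Pointwise

/-- if `A` and `B` are nonempty disjoint sets with
`A ∪ B = {1, 2, …, m}` (`m ≥ 2`), then the set of differences
`{j - i : i ∈ A, j ∈ B}` has at least `m - 1` elements. -/
theorem stmt10 (m : ℕ) (hm : 2 ≤ m) (A B : Finset ℤ)
    (hA : A.Nonempty) (hB : B.Nonempty) (hdis : Disjoint A B)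
    (hun : A ∪ B = Finset.Icc (1 : ℤ) (m : ℤ)) :
    m - 1 ≤ ((B ×ˢ A).image fun p => p.1 - p.2).card := by
  have himg : ((B ×ˢ A).image fun p => p.1 - p.2) = B - A := Finset.image_sub_product
  rw [himg, sub_eq_add_neg]
  have hcd := cauchy_davenport_add_of_linearOrder_isCancelAdd (α := ℤ) hB hA.neg
  have hcard : B.card + A.card = m := by
    have h1 : (A ∪ B).card = A.card + B.card := Finset.card_union_of_disjoint hdis
    rw [hun] at h1
    rw [Int.card_Icc] at h1
    omega
  rw [Finset.card_neg] at hcd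
  omega
end
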